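/- arXiv:1704.08059 — 2 statements merged into one kernel-verified Lean document; each statement's English description precedes it below -/
import Mathlib

section
/- For constants a > 0 and b > 0, the function f(x) = a·log σ(x) + b·log σ(−x), where σ(x) = 1/(1+e^{−x}), attains its unique maximum at x = log(a/b). -/
noncomputable def sigmoid (x : ℝ) : ℝ := 1 / (1 + Real.exp (-x))

lemma sigmoid_pos (x : ℝ) : 0 < sigmoid x := by
  unfold sigmoid; positivity

lemma sigmoid_lt_one (x : ℝ) : sigmoid x < 1 := by
  unfold sigmoid
  rw [div_lt_one (by positivity)]
  linarith [Real.exp_pos (-x)]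

lemma sigmoid_neg (x : ℝ) : sigmoid (-x) = 1 - sigmoid x := by
  unfold sigmoid
  rw [neg_neg]
  have h1 : (1 : ℝ) + Real.exp (-x) ≠ 0 := by positivity
  have h2 : (1 : ℝ) + Real.exp x ≠ 0 := by positivity
  have he : Real.exp x * Real.exp (-x) = 1 := by
    rw [← Real.exp_add]; simp
  field_simp
  nlinarith [he]

lemma sigmoid_injective : Function.Injective sigmoid := by
  intro x y h
  unfold sigmoid at h
  have h1 : (1 : ℝ) + Real.exp (-x) ≠ 0 := by positivity
  have h2 : (1 : ℝ) + Real.exp (-y) ≠ 0 := by positivity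
  field_simp at h
  have := Real.exp_injective (by linarith : Real.exp (-x) = Real.exp (-y))
  linarith

theorem sgns_unique_max (a b : ℝ) (ha : 0 < a) (hb : 0 < b)
    (f : ℝ → ℝ) (hf : ∀ x, f x = a * Real.log (sigmoid x) + b * Real.log (sigmoid (-x))) :
    ∀ x : ℝ, x ≠ Real.log (a / b) → f x < f (Real.log (a / b)) := by
  intro x hx
  set L := Real.log (a / b) with hL
  have hab : 0 < a + b := by linarith
  have hq : sigmoid L = a / (a + b) := by
    unfold sigmoid
    rw [hL, ← Real.log_inv, Real.exp_log (by positivity)]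
    rw [inv_div]
    field_simp
  set p := sigmoid x with hpdef
  have hp0 : 0 < p := sigmoid_pos x
  have hp1 : p < 1 := sigmoid_lt_one x
  have hq0 : (0:ℝ) < a / (a + b) := by positivity
  have hq1 : a / (a + b) < 1 := by rw [div_lt_one hab]; linarith
  have hpq : p ≠ a / (a + b) := by
    intro h
    exact hx (sigmoid_injective (by rw [← hpdef, h, hq]))
  rw [hf, hf, sigmoid_neg, sigmoid_neg, hq]
  have hbr : 1 - a / (a + b) = b / (a + b) := by field_simp; ring
  rw [hbr]
  have h1 : Real.log p - Real.log (a / (a + b)) < p / (a / (a + b)) - 1 := by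
    rw [← Real.log_div hp0.ne' hq0.ne']
    refine Real.log_lt_sub_one_of_pos (by positivity) ?_
    intro h
    apply hpq
    rw [div_eq_one_iff_eq hq0.ne'] at h
    exact h
  have hq0' : (0:ℝ) < b / (a + b) := by positivity
  have h2 : Real.log (1 - p) - Real.log (b / (a + b)) <
      (1 - p) / (b / (a + b)) - 1 := by
    rw [← Real.log_div (by linarith) hq0'.ne']
    refine Real.log_lt_sub_one_of_pos (div_pos (by linarith) hq0') ?_
    intro h
    rw [div_eq_one_iff_eq hq0'.ne'] at h
    apply hpq
    have : p = 1 - b / (a + b) := by linarith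
    rw [this]
    field_simp
    ring
  have e1 : p / (a / (a + b)) = (a + b) * p / a := by
    field_simp
  have e2 : (1 - p) / (b / (a + b)) = (a + b) * (1 - p) / b := by
    field_simp
  rw [e1] at h1
  rw [e2] at h2
  have h1' : a * (Real.log p - Real.log (a / (a + b))) < (a + b) * p - a := by
    have := mul_lt_mul_of_pos_left h1 ha
    calc a * (Real.log p - Real.log (a / (a + b)))
        < a * ((a + b) * p / a - 1) := this
      _ = (a + b) * p - a := by field_simp
  have h2' : b * (Real.log (1 - p) - Real.log (b / (a + b))) <
      (a + b) * (1 - p) - b := by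
    have := mul_lt_mul_of_pos_left h2 hb
    calc b * (Real.log (1 - p) - Real.log (b / (a + b)))
        < b * ((a + b) * (1 - p) / b - 1) := this
      _ = (a + b) * (1 - p) - b := by field_simp
  nlinarith [h1', h2']
end

section
/- The unconstrained maximizer of F(X) = Σ_{w,c} [a_{w,c}·log σ(x_{w,c}) + b_{w,c}·log σ(−x_{w,c})] over X ∈ ℝ^{n×m} with all a_{w,c}, b_{w,c} > 0 is the matrix with entries x*_{w,c} = log(a_{w,c}/b_{w,c}), and it is the unique global maximizer. -/
lemma log_sigmoid (x : ℝ) :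
    Real.log (sigmoid x) = x - Real.log (1 + Real.exp x) := by
  unfold sigmoid
  rw [Real.log_div one_ne_zero (by positivity), Real.log_one]
  have h : 1 + Real.exp (-x) = Real.exp (-x) * (1 + Real.exp x) := by
    rw [mul_add, mul_one, ← Real.exp_add]
    simp [add_comm]
  rw [h, Real.log_mul (Real.exp_ne_zero _) (by positivity), Real.log_exp]
  ring

lemma log_sigmoid_neg (x : ℝ) :
    Real.log (sigmoid (-x)) = - Real.log (1 + Real.exp x) := by
  unfold sigmoid
  rw [neg_neg, Real.log_div one_ne_zero (by positivity), Real.log_one]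
  ring

lemma entry_lt (A B x : ℝ) (hA : 0 < A) (hB : 0 < B) (hx : x ≠ Real.log (A / B)) :
    A * Real.log (sigmoid x) + B * Real.log (sigmoid (-x)) <
      A * Real.log (sigmoid (Real.log (A / B))) +
        B * Real.log (sigmoid (-(Real.log (A / B)))) := by
  set v := Real.log (A / B) with hv
  have hAB : 0 < A + B := by linarith
  have hev : Real.exp v = A / B := Real.exp_log (by positivity)
  set t := x - v with htdef
  have ht : t ≠ 0 := sub_ne_zero.mpr hx
  have hs : (0:ℝ) < A / (A + B) := by positivity
  have hs1 : (0:ℝ) < 1 - A / (A + B) := by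
    have : A / (A + B) < 1 := (div_lt_one hAB).mpr (by linarith)
    linarith
  have hconv := strictConvexOn_exp.2 (Set.mem_univ t) (Set.mem_univ 0) ht hs hs1 (by ring)
  simp only [smul_eq_mul, mul_zero, add_zero, Real.exp_zero, mul_one] at hconv
  -- hconv : exp (A/(A+B) * t) < A/(A+B) * exp t + (1 - A/(A+B))
  have hpos : (0:ℝ) < A / (A + B) * Real.exp t + (1 - A / (A + B)) := by positivity
  have hlog : A / (A + B) * t < Real.log (A / (A + B) * Real.exp t + (1 - A / (A + B))) :=
    (Real.lt_log_iff_exp_lt hpos).mpr hconv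
  have hx' : Real.exp x = A / B * Real.exp t := by
    rw [← hev, ← Real.exp_add]
    congr 1
    rw [htdef]; ring
  have hid : A / (A + B) * Real.exp t + (1 - A / (A + B)) = (A * Real.exp t + B) / (A + B) := by
    field_simp
    ring
  have h1x : 1 + Real.exp x = (A * Real.exp t + B) / B := by
    rw [hx']; field_simp; ring
  have h1v : 1 + Real.exp v = (A + B) / B := by
    rw [hev]; field_simp; ring
  have hexppos : (0:ℝ) < Real.exp t := Real.exp_pos t
  have hdiff : Real.log (1 + Real.exp x) - Real.log (1 + Real.exp v) =
      Real.log (A / (A + B) * Real.exp t + (1 - A / (A + B))) := by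
    rw [hid, h1x, h1v, Real.log_div (by positivity) (ne_of_gt hB),
      Real.log_div (by positivity) (ne_of_gt hB),
      Real.log_div (by positivity) (ne_of_gt hAB)]
    ring
  have hkey : A * (x - v) < (A + B) * (Real.log (1 + Real.exp x) - Real.log (1 + Real.exp v)) := by
    rw [hdiff, ← htdef]
    have := mul_lt_mul_of_pos_left hlog hAB
    calc A * t = (A + B) * (A / (A + B) * t) := by field_simp
    _ < _ := this
  rw [log_sigmoid, log_sigmoid_neg, log_sigmoid, log_sigmoid_neg]
  nlinarith [hkey]

lemma entry_le (A B x : ℝ) (hA : 0 < A) (hB : 0 < B) :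
    A * Real.log (sigmoid x) + B * Real.log (sigmoid (-x)) ≤
      A * Real.log (sigmoid (Real.log (A / B))) +
        B * Real.log (sigmoid (-(Real.log (A / B)))) := by
  by_cases hx : x = Real.log (A / B)
  · rw [hx]
  · exact (entry_lt A B x hA hB hx).le

theorem sgns_objective_unique_max (n m : ℕ)
    (a b : Fin n → Fin m → ℝ)
    (ha : ∀ w c, 0 < a w c) (hb : ∀ w c, 0 < b w c)
    (F : Matrix (Fin n) (Fin m) ℝ → ℝ)
    (hF : ∀ X, F X = ∑ w : Fin n, ∑ c : Fin m,
      (a w c * Real.log (sigmoid (X w c)) + b w c * Real.log (sigmoid (-(X w c)))))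
    (Xstar : Matrix (Fin n) (Fin m) ℝ)
    (hXstar : ∀ w c, Xstar w c = Real.log (a w c / b w c)) :
    ∀ X : Matrix (Fin n) (Fin m) ℝ, X ≠ Xstar → F X < F Xstar := by
  intro X hX
  obtain ⟨w0, hw0⟩ : ∃ w, X w ≠ Xstar w := by
    by_contra h
    push_neg at h
    exact hX (funext h)
  obtain ⟨c0, hc0⟩ : ∃ c, X w0 c ≠ Xstar w0 c := by
    by_contra h
    push_neg at h
    exact hw0 (funext h)
  rw [hF, hF]
  apply Finset.sum_lt_sum
  · intro w _
    apply Finset.sum_le_sum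
    intro c _
    rw [hXstar w c]
    exact entry_le _ _ _ (ha w c) (hb w c)
  · refine ⟨w0, Finset.mem_univ w0, ?_⟩
    apply Finset.sum_lt_sum
    · intro c _
      rw [hXstar w0 c]
      exact entry_le _ _ _ (ha w0 c) (hb w0 c)
    · refine ⟨c0, Finset.mem_univ c0, ?_⟩
      rw [hXstar w0 c0]
      exact entry_lt _ _ _ (ha w0 c0) (hb w0 c0) (by rw [← hXstar w0 c0]; exact hc0)
end
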